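/- Let p ∈ ℝ with p ≥ 1, λ ∈ [0, 1], and r, s ∈ ℝ with r > s ≥ 0. Then (λr + (1 − λ)s)^p ≤ (1 − δ_p)·(λ r^p + (1 − λ) s^p), where δ_p = (1 − s/r)² · (p(p − 1)λ(1 − λ)/2) if 1 ≤ p < 2, and δ_p = (1 − s/r)² · λ(1 − λ^{p−1}) if p ≥ 2. -/

import Mathlib

open Real Set

lemma aux_conv_lt2 (p : ℝ) (hp : 1 ≤ p) (hp2 : p < 2) :
    ConvexOn ℝ (Set.Icc (0:ℝ) 1)
      (fun x : ℝ => x ^ p - p * (p - 1) / 2 * x ^ 2) := by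
  have hp0 : 0 < p := by linarith
  have hint : interior (Set.Icc (0:ℝ) 1) = Set.Ioo (0:ℝ) 1 := interior_Icc
  refine convexOn_of_hasDerivWithinAt2_nonneg (convex_Icc 0 1) ?_
    (f' := fun x => p * x ^ (p - 1) - p * (p - 1) * x)
    (f'' := fun x => p * ((p - 1) * x ^ (p - 2)) - p * (p - 1)) ?_ ?_ ?_
  · intro x _
    exact ((Real.continuousAt_rpow_const x p (Or.inr hp0.le)).sub
      (by fun_prop)).continuousWithinAt
  · intro x hx
    rw [hint] at hx
    have h1 : HasDerivAt (fun x : ℝ => x ^ p) (p * x ^ (p - 1)) x :=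
      Real.hasDerivAt_rpow_const (Or.inl (ne_of_gt hx.1))
    have h2 : HasDerivAt (fun x : ℝ => p * (p - 1) / 2 * x ^ 2)
        (p * (p - 1) / 2 * (2 * x ^ 1)) x :=
      (hasDerivAt_pow 2 x).const_mul _
    have h3 := (h1.sub h2).hasDerivWithinAt (s := interior (Set.Icc (0:ℝ) 1))
    exact h3.congr_deriv (by ring)
  · intro x hx
    rw [hint] at hx
    have h1 : HasDerivAt (fun x : ℝ => x ^ (p - 1)) ((p - 1) * x ^ (p - 2)) x := by
      have h := Real.hasDerivAt_rpow_const (x := x) (p := p - 1) (Or.inl (ne_of_gt hx.1))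
      have e : p - 1 - 1 = p - 2 := by ring
      rwa [e] at h
    have h2 : HasDerivAt (fun x : ℝ => p * x ^ (p - 1) - p * (p - 1) * x)
        (p * ((p - 1) * x ^ (p - 2)) - p * (p - 1) * 1) x :=
      (h1.const_mul p).sub ((hasDerivAt_id x).const_mul (p * (p - 1)))
    have h3 := h2.hasDerivWithinAt (s := interior (Set.Icc (0:ℝ) 1))
    exact h3.congr_deriv (by ring)
  · intro x hx
    rw [hint] at hx
    have hx2 : (1:ℝ) ≤ x ^ (p - 2) :=
      Real.one_le_rpow_of_pos_of_le_one_of_nonpos hx.1 hx.2.le (by linarith)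
    show 0 ≤ p * ((p - 1) * x ^ (p - 2)) - p * (p - 1)
    nlinarith [mul_nonneg (mul_nonneg hp0.le (by linarith : (0:ℝ) ≤ p - 1))
      (by linarith : (0:ℝ) ≤ x ^ (p - 2) - 1)]

lemma aux_conv_ge2 (p : ℝ) (hp2 : 2 ≤ p) (t : ℝ) (ht0 : 0 ≤ t) (ht1 : t ≤ 1) :
    ConvexOn ℝ (Set.Icc (0:ℝ) 1)
      (fun x : ℝ => ((1 - t) * x + t) ^ p - (1 - t) ^ 2 * x ^ p) := by
  have hp0 : 0 < p := by linarith
  have hint : interior (Set.Icc (0:ℝ) 1) = Set.Ioo (0:ℝ) 1 := interior_Icc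
  refine convexOn_of_hasDerivWithinAt2_nonneg (convex_Icc 0 1) ?_
    (f' := fun x => (1 - t) * p * ((1 - t) * x + t) ^ (p - 1)
      - (1 - t) ^ 2 * (p * x ^ (p - 1)))
    (f'' := fun x => (1 - t) * ((1 - t) * (p - 1)) * (p * ((1 - t) * x + t) ^ (p - 2))
      - (1 - t) ^ 2 * (p * ((p - 1) * x ^ (p - 2)))) ?_ ?_ ?_
  · intro x _
    have c1 : ContinuousAt (fun x : ℝ => ((1 - t) * x + t) ^ p) x :=
      (ContinuousAt.rpow_const (by fun_prop) (Or.inr hp0.le))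
    have c2 : ContinuousAt (fun x : ℝ => (1 - t) ^ 2 * x ^ p) x :=
      (Real.continuousAt_rpow_const x p (Or.inr hp0.le)).const_smul ((1 - t) ^ 2)
    exact (c1.sub c2).continuousWithinAt
  · intro x hx
    rw [hint] at hx
    have hin : HasDerivAt (fun x : ℝ => (1 - t) * x + t) (1 - t) x := by
      simpa using ((hasDerivAt_id x).const_mul (1 - t)).add_const t
    have h1 : HasDerivAt (fun x : ℝ => ((1 - t) * x + t) ^ p)
        ((1 - t) * p * ((1 - t) * x + t) ^ (p - 1)) x :=
      hin.rpow_const (p := p) (Or.inr (by linarith))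
    have h2 : HasDerivAt (fun x : ℝ => (1 - t) ^ 2 * x ^ p)
        ((1 - t) ^ 2 * (p * x ^ (p - 1))) x :=
      (Real.hasDerivAt_rpow_const (Or.inl (ne_of_gt hx.1))).const_mul _
    exact (h1.sub h2).hasDerivWithinAt
  · intro x hx
    rw [hint] at hx
    have hinpos : 0 < (1 - t) * x + t := by nlinarith [hx.1, hx.2]
    have hin : HasDerivAt (fun x : ℝ => (1 - t) * x + t) (1 - t) x := by
      simpa using ((hasDerivAt_id x).const_mul (1 - t)).add_const t
    have h1 : HasDerivAt (fun x : ℝ => ((1 - t) * x + t) ^ (p - 1))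
        ((1 - t) * (p - 1) * ((1 - t) * x + t) ^ (p - 2)) x := by
      have h := hin.rpow_const (p := p - 1) (Or.inl (ne_of_gt hinpos))
      have e : p - 1 - 1 = p - 2 := by ring
      rwa [e] at h
    have h1' : HasDerivAt (fun x : ℝ => (1 - t) * p * ((1 - t) * x + t) ^ (p - 1))
        ((1 - t) * ((1 - t) * (p - 1)) * (p * ((1 - t) * x + t) ^ (p - 2))) x := by
      have h := h1.const_mul ((1 - t) * p)
      exact h.congr_deriv (by ring)
    have h2 : HasDerivAt (fun x : ℝ => x ^ (p - 1)) ((p - 1) * x ^ (p - 2)) x := by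
      have h := Real.hasDerivAt_rpow_const (x := x) (p := p - 1) (Or.inl (ne_of_gt hx.1))
      have e : p - 1 - 1 = p - 2 := by ring
      rwa [e] at h
    have h2' : HasDerivAt (fun x : ℝ => (1 - t) ^ 2 * (p * x ^ (p - 1)))
        ((1 - t) ^ 2 * (p * ((p - 1) * x ^ (p - 2)))) x :=
      ((h2.const_mul p).const_mul ((1 - t) ^ 2))
    exact (h1'.sub h2').hasDerivWithinAt
  · intro x hx
    rw [hint] at hx
    have hxle : x ≤ (1 - t) * x + t := by nlinarith [hx.2]
    have hmono : x ^ (p - 2) ≤ ((1 - t) * x + t) ^ (p - 2) :=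
      Real.rpow_le_rpow hx.1.le hxle (by linarith)
    show 0 ≤ (1 - t) * ((1 - t) * (p - 1)) * (p * ((1 - t) * x + t) ^ (p - 2))
      - (1 - t) ^ 2 * (p * ((p - 1) * x ^ (p - 2)))
    have key : 0 ≤ (p * (p - 1) * ((1 - t) * (1 - t))) *
        (((1 - t) * x + t) ^ (p - 2) - x ^ (p - 2)) :=
      mul_nonneg (mul_nonneg (mul_nonneg hp0.le (by linarith)) (mul_self_nonneg _)) (by linarith)
    nlinarith [key]

theorem refined_jensen_monomial
    (p : ℝ) (hp : 1 ≤ p) (l : ℝ) (hl : l ∈ Set.Icc (0 : ℝ) 1)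
    (r s : ℝ) (hs : 0 ≤ s) (hrs : s < r)
    (δ : ℝ)
    (hδ : δ = (1 - s / r) ^ 2 *
        (if p < 2 then p * (p - 1) * l * (1 - l) / 2 else l * (1 - l ^ (p - 1)))) :
    (l * r + (1 - l) * s) ^ p ≤ (1 - δ) * (l * r ^ p + (1 - l) * s ^ p) := by
  obtain ⟨hl0, hl1⟩ := hl
  have hr : 0 < r := lt_of_le_of_lt hs hrs
  set t : ℝ := s / r with htdef
  have ht0 : 0 ≤ t := div_nonneg hs hr.le
  have ht1 : t < 1 := (div_lt_one hr).2 hrs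
  have hst : s = t * r := by rw [htdef]; field_simp
  have hp0 : 0 < p := by linarith
  set u : ℝ := l + (1 - l) * t with hudef
  have hu0 : 0 ≤ u := by rw [hudef]; nlinarith
  have hu1 : u ≤ 1 := by rw [hudef]; nlinarith
  -- key inequality
  have key : δ ≤ l + (1 - l) * t ^ p - u ^ p := by
    by_cases hplt : p < 2
    · rw [hδ, if_pos hplt]
      have hconv := aux_conv_lt2 p hp hplt
      have h1m : (1:ℝ) ∈ Set.Icc (0:ℝ) 1 := by constructor <;> norm_num
      have htm : t ∈ Set.Icc (0:ℝ) 1 := ⟨ht0, ht1.le⟩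
      have hj := hconv.2 h1m htm hl0
        (show (0:ℝ) ≤ 1 - l by linarith) (show l + (1 - l) = 1 by ring)
      simp only [smul_eq_mul] at hj
      rw [Real.one_rpow] at hj
      have e : l * 1 + (1 - l) * t = u := by rw [hudef]; ring
      rw [e] at hj
      nlinarith [hj]
    · push_neg at hplt
      rw [hδ, if_neg (not_lt.2 hplt)]
      have hconv := aux_conv_ge2 p hplt t ht0 ht1.le
      have h0m : (0:ℝ) ∈ Set.Icc (0:ℝ) 1 := by constructor <;> norm_num
      have h1m : (1:ℝ) ∈ Set.Icc (0:ℝ) 1 := by constructor <;> norm_num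
      have hj := hconv.2 h0m h1m
        (show (0:ℝ) ≤ 1 - l by linarith) hl0 (show (1 - l) + l = 1 by ring)
      simp only [smul_eq_mul] at hj
      have he : (1 - l) * 0 + l * 1 = l := by ring
      rw [he] at hj
      have e0 : ((1 - t) * 0 + t : ℝ) = t := by ring
      have e1 : ((1 - t) * 1 + t : ℝ) = 1 := by ring
      have e2 : ((1 - t) * l + t : ℝ) = u := by rw [hudef]; ring
      rw [e0, e1, e2, Real.one_rpow, Real.zero_rpow (ne_of_gt hp0)] at hj
      have hlp : l ^ p = l * l ^ (p - 1) := by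
        nth_rewrite 1 [show p = 1 + (p - 1) by ring]
        rw [Real.rpow_add' hl0 (by simpa using (ne_of_gt hp0)), Real.rpow_one]
      have hlp2 : (1 - t) ^ 2 * l ^ p = (1 - t) ^ 2 * (l * l ^ (p - 1)) := by
        rw [hlp]
      nlinarith [hj, hlp2]
  -- assemble
  have hδ0 : 0 ≤ δ := by
    rw [hδ]
    apply mul_nonneg (sq_nonneg _)
    split_ifs with hplt
    · apply div_nonneg _ (by norm_num)
      exact mul_nonneg (mul_nonneg (mul_nonneg hp0.le (by linarith)) hl0) (by linarith)
    · have h1 : l ^ (p - 1) ≤ 1 := Real.rpow_le_one hl0 hl1 (by linarith)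
      exact mul_nonneg hl0 (by linarith)
  have htp1 : t ^ p ≤ 1 := Real.rpow_le_one ht0 ht1.le hp0.le
  have htp0 : 0 ≤ t ^ p := Real.rpow_nonneg ht0 p
  have hB1 : l + (1 - l) * t ^ p ≤ 1 := by nlinarith
  have hB0 : 0 ≤ l + (1 - l) * t ^ p := by nlinarith
  have hmain : u ^ p ≤ (1 - δ) * (l + (1 - l) * t ^ p) := by nlinarith
  have hLHS : (l * r + (1 - l) * s) ^ p = u ^ p * r ^ p := by
    rw [hst]
    have e : l * r + (1 - l) * (t * r) = u * r := by rw [hudef]; ring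
    rw [e, Real.mul_rpow hu0 hr.le]
  have hRHS : l * r ^ p + (1 - l) * s ^ p = (l + (1 - l) * t ^ p) * r ^ p := by
    rw [hst, Real.mul_rpow ht0 hr.le]
    ring
  rw [hLHS, hRHS, ← mul_assoc]
  exact mul_le_mul_of_nonneg_right hmain (Real.rpow_nonneg hr.le p)
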